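/- Under the conformal-block-expansion setup below, for every ε > 0 and every z₀ ∈ (0,1) there exists a finite constant C' such that for all z, z̄ with 0 < z ≤ z₀ ≤ z̄ < 1 one has (z z̄ / ((1−z)(1−z̄)))^{Δφ} · ∑_{i ∈ I : τ_i ≥ 2Δφ + ε} p_i · g_i(1−z, 1−z̄) ≤ C' · (1−z̄)^{ε/2}. -/

import Mathlib

open Set

/-- A single conformal block contribution:
`g_i(z, z̄) = (z z̄)^(τᵢ/2) ∑_{n,m} a^{(i)}_{n,m} z^n z̄^m`. -/
noncomputable def blockFun (τi : ℝ) (coef : ℕ × ℕ → ℝ) (z zb : ℝ) : ℝ :=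
  (z * zb) ^ (τi / 2) * ∑' nm : ℕ × ℕ, coef nm * z ^ nm.1 * zb ^ nm.2

lemma blockFun_nonneg (τi : ℝ) (coef : ℕ × ℕ → ℝ) (hc : ∀ nm, 0 ≤ coef nm)
    {z zb : ℝ} (hz : 0 ≤ z) (hzb : 0 ≤ zb) : 0 ≤ blockFun τi coef z zb :=
  mul_nonneg (Real.rpow_nonneg (mul_nonneg hz hzb) _)
    (tsum_nonneg fun nm => mul_nonneg (mul_nonneg (hc nm) (pow_nonneg hz _))
      (pow_nonneg hzb _))

lemma blockFun_mono (τi : ℝ) (hτ : 0 ≤ τi) (coef : ℕ × ℕ → ℝ) (hc : ∀ nm, 0 ≤ coef nm)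
    {z z' zb zb' : ℝ} (hz : 0 ≤ z) (hzz' : z ≤ z') (hzb : 0 ≤ zb) (hzbzb' : zb ≤ zb')
    (hs : Summable (fun nm : ℕ × ℕ => coef nm * z' ^ nm.1 * zb' ^ nm.2)) :
    blockFun τi coef z zb ≤ blockFun τi coef z' zb' := by
  have hz' : 0 ≤ z' := hz.trans hzz'
  have hzb' : 0 ≤ zb' := hzb.trans hzbzb'
  have hterm : ∀ nm : ℕ × ℕ, coef nm * z ^ nm.1 * zb ^ nm.2 ≤
      coef nm * z' ^ nm.1 * zb' ^ nm.2 := fun nm =>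
    mul_le_mul (mul_le_mul_of_nonneg_left (pow_le_pow_left₀ hz hzz' nm.1) (hc nm))
      (pow_le_pow_left₀ hzb hzbzb' nm.2) (pow_nonneg hzb _)
      (mul_nonneg (hc nm) (pow_nonneg hz' _))
  have hs0 : Summable (fun nm : ℕ × ℕ => coef nm * z ^ nm.1 * zb ^ nm.2) :=
    Summable.of_nonneg_of_le
      (fun nm => mul_nonneg (mul_nonneg (hc nm) (pow_nonneg hz _)) (pow_nonneg hzb _))
      hterm hs
  unfold blockFun
  have h1 : (z * zb) ^ (τi / 2) ≤ (z' * zb') ^ (τi / 2) :=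
    Real.rpow_le_rpow (mul_nonneg hz hzb) (mul_le_mul hzz' hzbzb' hzb hz') (by linarith)
  exact mul_le_mul h1 (Summable.tsum_le_tsum hterm hs0 hs)
    (tsum_nonneg fun nm => mul_nonneg (mul_nonneg (hc nm) (pow_nonneg hz _))
      (pow_nonneg hzb _)) (Real.rpow_nonneg (mul_nonneg hz' hzb') _)

/-- The key rpow coefficient inequality. -/
lemma coeff_ineq {x u v v₀ Δφ ε τi : ℝ} (hx : 0 < x) (hu : 0 < u) (hv : 0 < v)
    (hv0 : 0 < v₀) (hvv0 : v ≤ v₀) (hε : 0 < ε) (hτ : 2 * Δφ + ε ≤ τi) :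
    (x / (u * v)) ^ Δφ * (u * v) ^ (τi / 2) ≤
      v ^ (ε / 2) * v₀ ^ (-(ε / 2)) * ((x / (u * v₀)) ^ Δφ * (u * v₀) ^ (τi / 2)) := by
  set α : ℝ := τi / 2 - Δφ with hα
  have hαε : ε / 2 ≤ α := by simp only [hα]; linarith
  have key : ∀ w : ℝ, 0 < w →
      (x / (u * w)) ^ Δφ * (u * w) ^ (τi / 2) = x ^ Δφ * (u ^ α * w ^ α) := by
    intro w hw
    rw [Real.div_rpow hx.le (mul_pos hu hw).le]
    rw [hα, Real.rpow_sub hu, Real.rpow_sub hw,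
      Real.mul_rpow hu.le hw.le, Real.mul_rpow hu.le hw.le]
    have h1 : (u : ℝ) ^ Δφ ≠ 0 := (Real.rpow_pos_of_pos hu _).ne'
    have h2 : (w : ℝ) ^ Δφ ≠ 0 := (Real.rpow_pos_of_pos hw _).ne'
    field_simp
  rw [key v hv, key v₀ hv0]
  have hva : v ^ α = v ^ (ε / 2) * v ^ (α - ε / 2) := by
    rw [← Real.rpow_add hv]; ring_nf
  have hv0a : v₀ ^ (-(ε / 2)) * v₀ ^ α = v₀ ^ (α - ε / 2) := by
    rw [← Real.rpow_add hv0]; ring_nf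
  have hmono : v ^ (α - ε / 2) ≤ v₀ ^ (α - ε / 2) :=
    Real.rpow_le_rpow hv.le hvv0 (by linarith)
  calc x ^ Δφ * (u ^ α * v ^ α)
      = v ^ (ε / 2) * (x ^ Δφ * u ^ α) * v ^ (α - ε / 2) := by rw [hva]; ring
    _ ≤ v ^ (ε / 2) * (x ^ Δφ * u ^ α) * v₀ ^ (α - ε / 2) := by
        apply mul_le_mul_of_nonneg_left hmono
        positivity
    _ = v ^ (ε / 2) * v₀ ^ (-(ε / 2)) * (x ^ Δφ * (u ^ α * v₀ ^ α)) := by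
        rw [← hv0a]; ring

/-- crossed-channel high-twist estimate, Section 2.2.3: for every `ε > 0`
and `z₀ ∈ (0,1)` there is `C'` with
`(z z̄/((1-z)(1-z̄)))^Δφ ∑_{τᵢ ≥ 2Δφ+ε} pᵢ gᵢ(1-z, 1-z̄) ≤ C' (1-z̄)^(ε/2)`
for `0 < z ≤ z₀ ≤ z̄ < 1`. -/
theorem stmt6 {I : Type*} [Countable I] (Δφ : ℝ) (hΔ : 0 < Δφ)
    (p τ : I → ℝ) (coef : I → ℕ × ℕ → ℝ)
    (hp : ∀ i, 0 ≤ p i) (hτ : ∀ i, 0 ≤ τ i) (hcoef : ∀ i nm, 0 ≤ coef i nm)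
    (hinner : ∀ i, ∀ z zb : ℝ, 0 ≤ z → z < 1 → 0 ≤ zb → zb < 1 →
      Summable (fun nm : ℕ × ℕ => coef i nm * z ^ nm.1 * zb ^ nm.2))
    (hsum : ∀ z zb : ℝ, z ∈ Ioo (0:ℝ) 1 → zb ∈ Ioo (0:ℝ) 1 →
      Summable (fun i => p i * blockFun (τ i) (coef i) z zb))
    (hcross : ∀ z zb : ℝ, z ∈ Ioo (0:ℝ) 1 → zb ∈ Ioo (0:ℝ) 1 →
      1 + ∑' i, p i * blockFun (τ i) (coef i) z zb =
        (z * zb / ((1 - z) * (1 - zb))) ^ Δφ *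
          (1 + ∑' i, p i * blockFun (τ i) (coef i) (1 - z) (1 - zb)))
    (ε : ℝ) (hε : 0 < ε) (z₀ : ℝ) (hz₀ : z₀ ∈ Ioo (0:ℝ) 1) :
    ∃ C' : ℝ, ∀ z zb : ℝ, 0 < z → z ≤ z₀ → z₀ ≤ zb → zb < 1 →
      (z * zb / ((1 - z) * (1 - zb))) ^ Δφ *
        (∑' i : {j : I // 2 * Δφ + ε ≤ τ j},
          p i.1 * blockFun (τ i.1) (coef i.1) (1 - z) (1 - zb)) ≤
        C' * (1 - zb) ^ (ε / 2) := by
  obtain ⟨hz₀0, hz₀1⟩ := hz₀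
  set v₀ : ℝ := 1 - z₀ with hv₀def
  have hv₀ : 0 < v₀ := by simp only [hv₀def]; linarith
  have hv₀1 : v₀ < 1 := by simp only [hv₀def]; linarith
  set M : ℝ := 1 + ∑' i, p i * blockFun (τ i) (coef i) z₀ z₀ with hMdef
  have hM : 0 ≤ M := by
    have : 0 ≤ ∑' i, p i * blockFun (τ i) (coef i) z₀ z₀ :=
      tsum_nonneg fun i => mul_nonneg (hp i)
        (blockFun_nonneg _ _ (hcoef i) hz₀0.le hz₀0.le)
    simp only [hMdef]; linarith
  refine ⟨v₀ ^ (-(ε / 2)) * z₀ ^ (-Δφ) * M, ?_⟩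
  intro z zb hz hzz₀ hz₀zb hzb1
  have hz1 : z < 1 := lt_of_le_of_lt hzz₀ hz₀1
  have hzb0 : 0 < zb := lt_of_lt_of_le hz₀0 hz₀zb
  have hu : (0:ℝ) < 1 - z := by linarith
  have hu1 : 1 - z < 1 := by linarith
  have hv : (0:ℝ) < 1 - zb := by linarith
  have hvv₀ : 1 - zb ≤ v₀ := by simp only [hv₀def]; linarith
  -- summabilities
  have hS1 : Summable (fun i => p i * blockFun (τ i) (coef i) (1 - z) (1 - zb)) :=
    hsum (1 - z) (1 - zb) ⟨hu, by linarith⟩ ⟨hv, by linarith⟩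
  have hS2 : Summable (fun i => p i * blockFun (τ i) (coef i) (1 - z) v₀) :=
    hsum (1 - z) v₀ ⟨hu, by linarith⟩ ⟨hv₀, hv₀1⟩
  have hS3 : Summable (fun i => p i * blockFun (τ i) (coef i) z z₀) :=
    hsum z z₀ ⟨hz, hz1⟩ ⟨hz₀0, hz₀1⟩
  have hS4 : Summable (fun i => p i * blockFun (τ i) (coef i) z₀ z₀) :=
    hsum z₀ z₀ ⟨hz₀0, hz₀1⟩ ⟨hz₀0, hz₀1⟩
  set B : ℝ := (z * zb / ((1 - z) * (1 - zb))) ^ Δφ with hBdef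
  set B' : ℝ := (z * zb / ((1 - z) * v₀)) ^ Δφ with hB'def
  have hB'nonneg : 0 ≤ B' := Real.rpow_nonneg (by positivity) _
  have hterm_nonneg : ∀ i : I, 0 ≤ p i * blockFun (τ i) (coef i) (1 - z) (1 - zb) :=
    fun i => mul_nonneg (hp i) (blockFun_nonneg _ _ (hcoef i) hu.le hv.le)
  have hterm2_nonneg : ∀ i : I, 0 ≤ p i * blockFun (τ i) (coef i) (1 - z) v₀ :=
    fun i => mul_nonneg (hp i) (blockFun_nonneg _ _ (hcoef i) hu.le hv₀.le)
  -- step 1: pull B inside the tsum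
  rw [← tsum_mul_left]
  -- step 2: per-term bound and summation
  have hsub1 : Summable (fun i : {j : I // 2 * Δφ + ε ≤ τ j} =>
      B * (p i.1 * blockFun (τ i.1) (coef i.1) (1 - z) (1 - zb))) :=
    (hS1.subtype _).mul_left B
  have hsub2 : Summable (fun i : {j : I // 2 * Δφ + ε ≤ τ j} =>
      (1 - zb) ^ (ε / 2) * v₀ ^ (-(ε / 2)) *
        (B' * (p i.1 * blockFun (τ i.1) (coef i.1) (1 - z) v₀))) :=
    ((hS2.subtype _).mul_left B').mul_left _
  have hpt : ∀ i : {j : I // 2 * Δφ + ε ≤ τ j},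
      B * (p i.1 * blockFun (τ i.1) (coef i.1) (1 - z) (1 - zb)) ≤
        (1 - zb) ^ (ε / 2) * v₀ ^ (-(ε / 2)) *
          (B' * (p i.1 * blockFun (τ i.1) (coef i.1) (1 - z) v₀)) := by
    rintro ⟨i, hi⟩
    simp only
    have hSle : (∑' nm : ℕ × ℕ, coef i nm * (1 - z) ^ nm.1 * (1 - zb) ^ nm.2) ≤
        ∑' nm : ℕ × ℕ, coef i nm * (1 - z) ^ nm.1 * v₀ ^ nm.2 := by
      refine Summable.tsum_le_tsum (fun nm => ?_)
        (hinner i (1 - z) (1 - zb) hu.le hu1 hv.le (by linarith))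
        (hinner i (1 - z) v₀ hu.le hu1 hv₀.le hv₀1)
      exact mul_le_mul_of_nonneg_left (pow_le_pow_left₀ hv.le hvv₀ nm.2)
        (mul_nonneg (hcoef i nm) (pow_nonneg hu.le _))
    have hS0 : 0 ≤ ∑' nm : ℕ × ℕ, coef i nm * (1 - z) ^ nm.1 * (1 - zb) ^ nm.2 :=
      tsum_nonneg fun nm => mul_nonneg (mul_nonneg (hcoef i nm) (by positivity))
        (by positivity)
    have hcoe := coeff_ineq (x := z * zb) (u := 1 - z) (v := 1 - zb) (v₀ := v₀)
      (Δφ := Δφ) (ε := ε) (τi := τ i) (by positivity) hu hv hv₀ hvv₀ hε hi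
    unfold blockFun
    calc B * (p i * (((1 - z) * (1 - zb)) ^ (τ i / 2) *
          ∑' nm : ℕ × ℕ, coef i nm * (1 - z) ^ nm.1 * (1 - zb) ^ nm.2))
        = p i * ((B * ((1 - z) * (1 - zb)) ^ (τ i / 2)) *
          ∑' nm : ℕ × ℕ, coef i nm * (1 - z) ^ nm.1 * (1 - zb) ^ nm.2) := by ring
      _ ≤ p i * (((1 - zb) ^ (ε / 2) * v₀ ^ (-(ε / 2)) *
          (B' * ((1 - z) * v₀) ^ (τ i / 2))) *
          ∑' nm : ℕ × ℕ, coef i nm * (1 - z) ^ nm.1 * v₀ ^ nm.2) := by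
          apply mul_le_mul_of_nonneg_left _ (hp i)
          apply mul_le_mul hcoe hSle hS0
          positivity
      _ = (1 - zb) ^ (ε / 2) * v₀ ^ (-(ε / 2)) *
          (B' * (p i * (((1 - z) * v₀) ^ (τ i / 2) *
            ∑' nm : ℕ × ℕ, coef i nm * (1 - z) ^ nm.1 * v₀ ^ nm.2))) := by ring
  have hstep2 := Summable.tsum_le_tsum hpt hsub1 hsub2
  refine hstep2.trans ?_
  -- step 3: extend the subtype sum to the full sum
  rw [tsum_mul_left, tsum_mul_left]
  have hext : (∑' i : {j : I // 2 * Δφ + ε ≤ τ j},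
      p i.1 * blockFun (τ i.1) (coef i.1) (1 - z) v₀) ≤
      ∑' i : I, p i * blockFun (τ i) (coef i) (1 - z) v₀ := by
    have := Summable.tsum_subtype_le (fun i : I => p i * blockFun (τ i) (coef i) (1 - z) v₀)
      {j : I | 2 * Δφ + ε ≤ τ j} hterm2_nonneg hS2
    exact this
  -- step 4: crossing bound on the full sum
  have hcr := hcross z z₀ ⟨hz, hz1⟩ ⟨hz₀0, hz₀1⟩
  have hB'' : (0:ℝ) < (z * z₀ / ((1 - z) * v₀)) ^ Δφ := by positivity
  have hfull : B' * (∑' i : I, p i * blockFun (τ i) (coef i) (1 - z) v₀) ≤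
      z₀ ^ (-Δφ) * M := by
    have hB'split : B' = (z * z₀ / ((1 - z) * v₀)) ^ Δφ * (zb / z₀) ^ Δφ := by
      rw [hB'def, ← Real.mul_rpow (by positivity) (by positivity)]
      congr 1
      field_simp
    have hmonoSum : (∑' i, p i * blockFun (τ i) (coef i) z z₀) ≤
        ∑' i, p i * blockFun (τ i) (coef i) z₀ z₀ := by
      refine Summable.tsum_le_tsum (fun i => ?_) hS3 hS4
      exact mul_le_mul_of_nonneg_left
        (blockFun_mono (τ i) (hτ i) (coef i) (hcoef i) hz.le hzz₀ hz₀0.le le_rfl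
          (hinner i z₀ z₀ hz₀0.le hz₀1 hz₀0.le hz₀1)) (hp i)
    have hcr' : (z * z₀ / ((1 - z) * v₀)) ^ Δφ *
        (∑' i, p i * blockFun (τ i) (coef i) (1 - z) v₀) ≤ M := by
      have h1 : (z * z₀ / ((1 - z) * v₀)) ^ Δφ *
          (1 + ∑' i, p i * blockFun (τ i) (coef i) (1 - z) v₀) =
          1 + ∑' i, p i * blockFun (τ i) (coef i) z z₀ := hcr.symm
      have h2 : (z * z₀ / ((1 - z) * v₀)) ^ Δφ *
          (∑' i, p i * blockFun (τ i) (coef i) (1 - z) v₀) ≤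
          1 + ∑' i, p i * blockFun (τ i) (coef i) z z₀ := by
        rw [← h1]
        nlinarith [hB''.le]
      refine h2.trans ?_
      simp only [hMdef]
      linarith
    have hzbz₀ : (zb / z₀) ^ Δφ ≤ z₀ ^ (-Δφ) := by
      rw [Real.rpow_neg hz₀0.le, ← Real.inv_rpow hz₀0.le]
      refine Real.rpow_le_rpow (by positivity) ?_ hΔ.le
      rw [← one_div]
      gcongr
    calc B' * (∑' i : I, p i * blockFun (τ i) (coef i) (1 - z) v₀)
        = (zb / z₀) ^ Δφ * ((z * z₀ / ((1 - z) * v₀)) ^ Δφ *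
            (∑' i : I, p i * blockFun (τ i) (coef i) (1 - z) v₀)) := by
          rw [hB'split]; ring
      _ ≤ z₀ ^ (-Δφ) * M := by
          exact mul_le_mul hzbz₀ hcr' (mul_nonneg hB''.le
            (tsum_nonneg fun i => hterm2_nonneg i)) (Real.rpow_nonneg hz₀0.le _)
  -- combine
  have hsum2_nonneg : 0 ≤ ∑' i : {j : I // 2 * Δφ + ε ≤ τ j},
      p i.1 * blockFun (τ i.1) (coef i.1) (1 - z) v₀ :=
    tsum_nonneg fun i => hterm2_nonneg i.1
  calc (1 - zb) ^ (ε / 2) * v₀ ^ (-(ε / 2)) *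
        (B' * ∑' i : {j : I // 2 * Δφ + ε ≤ τ j},
          p i.1 * blockFun (τ i.1) (coef i.1) (1 - z) v₀)
      ≤ (1 - zb) ^ (ε / 2) * v₀ ^ (-(ε / 2)) *
        (B' * ∑' i : I, p i * blockFun (τ i) (coef i) (1 - z) v₀) := by
        apply mul_le_mul_of_nonneg_left (mul_le_mul_of_nonneg_left hext hB'nonneg)
        positivity
    _ ≤ (1 - zb) ^ (ε / 2) * v₀ ^ (-(ε / 2)) * (z₀ ^ (-Δφ) * M) := by
        apply mul_le_mul_of_nonneg_left hfull
        positivity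
    _ = v₀ ^ (-(ε / 2)) * z₀ ^ (-Δφ) * M * (1 - zb) ^ (ε / 2) := by ring
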